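/- Under the hypotheses ‖γ‖ ≥ b|γ| and |w_γ| ≤ exp(−((3 + log Δ)/b + 3)‖γ‖) for all polymers γ in a graph of maximum degree Δ, for every vertex v the sum ∑_{γ ≁ γ_v} |w_γ| e^{|γ| + 3‖γ‖} is strictly less than 1, where γ_v denotes the single-vertex polymer at v and γ ≁ γ_v means v ∈ V(γ). -/

import Mathlib

attribute [local instance] Classical.propDecidable

open Finset

namespace KPaux

variable {V : Type*} [Fintype V] [DecidableEq V] [LinearOrder V]

set_option linter.unusedSectionVars false
set_option maxHeartbeats 1000000

lemma walk_cross (G : SimpleGraph V) [DecidableRel G.Adj] (S A : Finset V) :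
    ∀ {x y : (↑S : Set V)} (_ : (SimpleGraph.induce (↑S : Set V) G).Walk x y),
      (x : V) ∉ A → (y : V) ∈ A → ∃ a ∈ S \ A, ∃ c ∈ A, G.Adj c a := by
  intro x y p
  induction p with
  | nil => intro h1 h2; exact absurd h2 h1
  | @cons x y z hadj p ih =>
    intro hx hz
    by_cases hy : (y : V) ∈ A
    · exact ⟨x, Finset.mem_sdiff.mpr ⟨by simpa using x.2, hx⟩, y, hy,
        (by simpa using hadj : G.Adj (x : V) (y : V)).symm⟩
    · exact ih hy hz

/-- crossing edge lemma -/
lemma crossing (G : SimpleGraph V) [DecidableRel G.Adj] (S A : Finset V)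
    (hconn : (SimpleGraph.induce (↑S : Set V) G).Connected)
    (hA : A ⊆ S) (v : V) (hvA : v ∈ A) (hne : (S \ A).Nonempty) :
    ∃ x ∈ S \ A, ∃ y ∈ A, G.Adj y x := by
  obtain ⟨b, hb⟩ := hne
  have hbS : b ∈ S := (Finset.mem_sdiff.mp hb).1
  have hbA : b ∉ A := (Finset.mem_sdiff.mp hb).2
  have hvS : v ∈ S := hA hvA
  obtain ⟨p⟩ : (SimpleGraph.induce (↑S : Set V) G).Reachable
      ⟨b, by simpa using hbS⟩ ⟨v, by simpa using hvS⟩ := hconn.preconnected _ _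
  exact walk_cross G S A p hbA hvA

variable (G : SimpleGraph V) [DecidableRel G.Adj]

noncomputable def cand (S A : Finset V) : Finset V :=
  (S \ A).filter (fun x => ∃ y ∈ A, G.Adj y x)

noncomputable def nextA (S A : Finset V) : Finset V :=
  if h : (cand G S A).Nonempty then insert ((cand G S A).min' h) A else A

noncomputable def U (S : Finset V) (v : V) (i : ℕ) : Finset V := (nextA G S)^[i] {v}

noncomputable def u (S : Finset V) (v : V) : ℕ → V
  | 0 => v
  | (i+1) => if h : (cand G S (U G S v i)).Nonempty then (cand G S (U G S v i)).min' h else v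

variable {G}

lemma U_zero (S : Finset V) (v : V) : U G S v 0 = {v} := rfl

lemma U_succ (S : Finset V) (v : V) (i : ℕ) :
    U G S v (i+1) = nextA G S (U G S v i) := Function.iterate_succ_apply' _ _ _

lemma cand_subset (S A : Finset V) : cand G S A ⊆ S \ A := Finset.filter_subset _ _

lemma v_mem_U (S : Finset V) (v : V) (i : ℕ) : v ∈ U G S v i := by
  induction i with
  | zero => simp [U_zero]
  | succ i ih =>
    rw [U_succ, nextA]
    split
    · exact Finset.mem_insert_of_mem ih
    · exact ih

lemma U_succ_eq (S : Finset V) (v : V) (i : ℕ) :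
    U G S v (i+1) = insert (u G S v (i+1)) (U G S v i) := by
  rw [U_succ, nextA, u]
  split
  · rfl
  · rw [Finset.insert_eq_self.mpr (v_mem_U S v i)]

lemma u_mem_U (S : Finset V) (v : V) (i : ℕ) : u G S v i ∈ U G S v i := by
  cases i with
  | zero => simp [U_zero, u]
  | succ i => rw [U_succ_eq]; exact Finset.mem_insert_self _ _

lemma U_mono (S : Finset V) (v : V) {i j : ℕ} (h : i ≤ j) : U G S v i ⊆ U G S v j := by
  induction j with
  | zero => simpa [Nat.le_zero.mp h]
  | succ j ih =>
    rcases Nat.lt_or_ge i (j+1) with h' | h'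
    · exact (ih (Nat.lt_succ_iff.mp h')).trans (by rw [U_succ_eq]; exact Finset.subset_insert _ _)
    · have : i = j + 1 := le_antisymm h h'
      subst this; rfl

lemma U_subset (S : Finset V) (v : V) (hv : v ∈ S) (i : ℕ) : U G S v i ⊆ S := by
  induction i with
  | zero => simpa [U_zero]
  | succ i ih =>
    rw [U_succ, nextA]
    split
    · next h =>
      exact Finset.insert_subset
        ((Finset.mem_sdiff.mp (cand_subset S _ ((cand G S _).min'_mem h))).1) ih
    · exact ih

lemma mem_U_exists (S : Finset V) (v : V) (i : ℕ) {x : V} (hx : x ∈ U G S v i) :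
    ∃ j ≤ i, u G S v j = x := by
  induction i with
  | zero => exact ⟨0, le_refl _, by simpa [U_zero, u] using (Finset.mem_singleton.mp hx).symm⟩
  | succ i ih =>
    rw [U_succ_eq, Finset.mem_insert] at hx
    rcases hx with h | h
    · exact ⟨i+1, le_refl _, h.symm⟩
    · obtain ⟨j, hj, hju⟩ := ih h
      exact ⟨j, hj.trans (Nat.le_succ _), hju⟩

/-- candidates nonempty while U hasn't filled S -/
lemma cand_nonempty (S : Finset V) (v : V) (hv : v ∈ S)
    (hconn : (SimpleGraph.induce (↑S : Set V) G).Connected) (i : ℕ)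
    (hne : (S \ U G S v i).Nonempty) : (cand G S (U G S v i)).Nonempty := by
  obtain ⟨x, hx, y, hy, hadj⟩ := crossing G S (U G S v i) hconn (U_subset S v hv i) v
    (v_mem_U S v i) hne
  exact ⟨x, Finset.mem_filter.mpr ⟨hx, y, hy, hadj⟩⟩

lemma card_U (S : Finset V) (v : V) (hv : v ∈ S)
    (hconn : (SimpleGraph.induce (↑S : Set V) G).Connected) (i : ℕ) :
    (U G S v i).card = min (i+1) S.card := by
  induction i with
  | zero => simp [U_zero, Nat.one_le_iff_ne_zero.mpr (Finset.card_ne_zero_of_mem hv)]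
  | succ i ih =>
    rcases Nat.lt_or_ge (i+1) S.card with h | h
    · have hne : (S \ U G S v i).Nonempty := by
        rw [Finset.sdiff_nonempty]
        intro hSU
        have := Finset.card_le_card hSU
        omega
      have hcne := cand_nonempty S v hv hconn i hne
      have hmin := (cand G S (U G S v i)).min'_mem hcne
      have hnotmem : (cand G S (U G S v i)).min' hcne ∉ U G S v i :=
        (Finset.mem_sdiff.mp (cand_subset S _ hmin)).2
      rw [U_succ, nextA, dif_pos hcne, Finset.card_insert_of_notMem hnotmem, ih]
      omega
    · have hUi : U G S v i = S := by
        apply Finset.eq_of_subset_of_card_le (U_subset S v hv i)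
        omega
      have hce : cand G S (U G S v i) = ∅ := by
        rw [hUi]
        apply Finset.eq_empty_of_forall_notMem
        intro x hx
        exact absurd (Finset.mem_sdiff.mp (cand_subset S S hx)).1
          (Finset.mem_sdiff.mp (cand_subset S S hx)).2
      rw [U_succ, nextA, dif_neg (by simp [hce]), ih]
      omega

lemma U_eq_S (S : Finset V) (v : V) (hv : v ∈ S)
    (hconn : (SimpleGraph.induce (↑S : Set V) G).Connected) :
    U G S v (S.card - 1) = S := by
  apply Finset.eq_of_subset_of_card_le (U_subset S v hv _)
  rw [card_U S v hv hconn]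
  have : 1 ≤ S.card := Finset.card_pos.mpr ⟨v, hv⟩
  omega

/-- for steps strictly below card S, the candidate set is nonempty -/
lemma cand_step (S : Finset V) (v : V) (hv : v ∈ S)
    (hconn : (SimpleGraph.induce (↑S : Set V) G).Connected) {i : ℕ} (hi : i + 1 < S.card) :
    (cand G S (U G S v i)).Nonempty := by
  apply cand_nonempty S v hv hconn
  rw [Finset.sdiff_nonempty]
  intro hSU
  have h1 := Finset.card_le_card hSU
  have h2 := card_U S v hv hconn i
  omega

lemma u_mem_cand (S : Finset V) (v : V) {i : ℕ} (h : (cand G S (U G S v i)).Nonempty) :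
    u G S v (i+1) ∈ cand G S (U G S v i) := by
  rw [u, dif_pos h]; exact Finset.min'_mem _ h

lemma u_succ_not_mem (S : Finset V) (v : V) {i : ℕ} (h : (cand G S (U G S v i)).Nonempty) :
    u G S v (i+1) ∉ U G S v i :=
  (Finset.mem_sdiff.mp (cand_subset S _ (u_mem_cand S v h))).2

lemma u_inj (S : Finset V) (v : V) (hv : v ∈ S)
    (hconn : (SimpleGraph.induce (↑S : Set V) G).Connected) {s t : ℕ}
    (hst : s < t) (ht : t < S.card) : u G S v s ≠ u G S v t := by
  obtain ⟨t', rfl⟩ : ∃ t', t = t' + 1 := ⟨t - 1, by omega⟩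
  have hc : (cand G S (U G S v t')).Nonempty := cand_step S v hv hconn ht
  intro heq
  apply u_succ_not_mem S v hc
  rw [← heq]
  exact U_mono S v (by omega : s ≤ t') (u_mem_U S v s)

/-- parent existence -/
lemma parent_exists (S : Finset V) (v : V) (hv : v ∈ S)
    (hconn : (SimpleGraph.induce (↑S : Set V) G).Connected) {s : ℕ}
    (hs1 : 1 ≤ s) (hs : s < S.card) :
    ∃ j, j < s ∧ G.Adj (u G S v j) (u G S v s) := by
  obtain ⟨s', rfl⟩ : ∃ s', s = s' + 1 := ⟨s - 1, by omega⟩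
  have hc : (cand G S (U G S v s')).Nonempty := cand_step S v hv hconn hs
  have hm := u_mem_cand S v hc
  rw [cand, Finset.mem_filter] at hm
  obtain ⟨-, y, hy, hadj⟩ := hm
  obtain ⟨j, hj, rfl⟩ := mem_U_exists S v s' hy
  exact ⟨j, by omega, hadj⟩

noncomputable def pIdx (G : SimpleGraph V) [DecidableRel G.Adj] (S : Finset V) (v : V) (s : ℕ) : ℕ :=
  if h : ∃ j, j < s ∧ G.Adj (u G S v j) (u G S v s) then Nat.find h else 0

lemma pIdx_spec (S : Finset V) (v : V) {s : ℕ}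
    (h : ∃ j, j < s ∧ G.Adj (u G S v j) (u G S v s)) :
    pIdx G S v s < s ∧ G.Adj (u G S v (pIdx G S v s)) (u G S v s) := by
  rw [pIdx, dif_pos h]; exact Nat.find_spec h

lemma pIdx_min (S : Finset V) (v : V) {s j : ℕ}
    (hj : j < s) (hadj : G.Adj (u G S v j) (u G S v s)) : pIdx G S v s ≤ j := by
  rw [pIdx, dif_pos ⟨j, hj, hadj⟩]; exact Nat.find_min' _ ⟨hj, hadj⟩

/-- slot of a neighbour -/
noncomputable def slot (G : SimpleGraph V) [DecidableRel G.Adj] (x y : V) : ℕ :=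
  ((G.neighborFinset x).filter (fun z => z < y)).card

lemma slot_lt {Δ : ℕ} (hdeg : ∀ w, G.degree w ≤ Δ) {x y : V} (h : G.Adj x y) :
    slot G x y < Δ := by
  have hsub : (G.neighborFinset x).filter (fun z => z < y) ⊆ (G.neighborFinset x).erase y := by
    intro z hz
    rw [Finset.mem_filter] at hz
    exact Finset.mem_erase.mpr ⟨ne_of_lt hz.2, hz.1⟩
  have hy : y ∈ G.neighborFinset x := by rwa [SimpleGraph.mem_neighborFinset]
  calc slot G x y ≤ ((G.neighborFinset x).erase y).card := Finset.card_le_card hsub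
    _ = G.degree x - 1 := by rw [Finset.card_erase_of_mem hy]; rfl
    _ < Δ := by
        have h1 : 1 ≤ G.degree x := Finset.card_pos.mpr ⟨y, hy⟩
        have h2 := hdeg x
        omega

lemma slot_inj {x y y' : V} (h : G.Adj x y) (h' : G.Adj x y')
    (he : slot G x y = slot G x y') : y = y' := by
  rcases lt_trichotomy y y' with hlt | heq | hlt
  · exfalso
    have : (G.neighborFinset x).filter (fun z => z < y) ⊂
        (G.neighborFinset x).filter (fun z => z < y') := by
      constructor
      · exact fun z hz => by rw [Finset.mem_filter] at hz ⊢; exact ⟨hz.1, lt_trans hz.2 hlt⟩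
      · intro hsub
        have : y ∈ (G.neighborFinset x).filter (fun z => z < y) :=
          hsub (Finset.mem_filter.mpr ⟨(SimpleGraph.mem_neighborFinset _ _ _).mpr h, hlt⟩)
        simp at this
    exact absurd he (ne_of_lt (Finset.card_lt_card this))
  · exact heq
  · exfalso
    have : (G.neighborFinset x).filter (fun z => z < y') ⊂
        (G.neighborFinset x).filter (fun z => z < y) := by
      constructor
      · exact fun z hz => by rw [Finset.mem_filter] at hz ⊢; exact ⟨hz.1, lt_trans hz.2 hlt⟩
      · intro hsub
        have : y' ∈ (G.neighborFinset x).filter (fun z => z < y') :=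
          hsub (Finset.mem_filter.mpr ⟨(SimpleGraph.mem_neighborFinset _ _ _).mpr h', hlt⟩)
        simp at this
    exact absurd he (ne_of_gt (Finset.card_lt_card this))

/-- the code of a polymer -/
noncomputable def code (G : SimpleGraph V) [DecidableRel G.Adj] (S : Finset V) (v : V) : Finset (ℕ × ℕ) :=
  (Finset.Ico 1 S.card).image
    (fun s => (pIdx G S v s, slot G (u G S v (pIdx G S v s)) (u G S v s)))

lemma code_card (S : Finset V) (v : V) (hv : v ∈ S)
    (hconn : (SimpleGraph.induce (↑S : Set V) G).Connected) :
    (code G S v).card = S.card - 1 := by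
  rw [code, Finset.card_image_of_injOn, Nat.card_Ico]
  intro s hs t ht heq
  rw [Finset.coe_Ico, Set.mem_Ico] at hs ht
  have hps := parent_exists S v hv hconn hs.1 hs.2
  have hpt := parent_exists S v hv hconn ht.1 ht.2
  obtain ⟨hs1, hs2⟩ := pIdx_spec S v hps
  obtain ⟨ht1, ht2⟩ := pIdx_spec S v hpt
  have h1 : pIdx G S v s = pIdx G S v t := congrArg Prod.fst heq
  have h2 : slot G (u G S v (pIdx G S v s)) (u G S v s)
      = slot G (u G S v (pIdx G S v t)) (u G S v t) := congrArg Prod.snd heq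
  rw [h1] at hs2 h2
  have hu : u G S v s = u G S v t := slot_inj hs2 ht2 h2
  rcases lt_trichotomy s t with h | h | h
  · exact absurd hu (u_inj S v hv hconn h ht.2)
  · exact h
  · exact absurd hu.symm (u_inj S v hv hconn h hs.2)

lemma code_subset {Δ : ℕ} (hdeg : ∀ w, G.degree w ≤ Δ) (S : Finset V) (v : V) (hv : v ∈ S)
    (hconn : (SimpleGraph.induce (↑S : Set V) G).Connected) :
    code G S v ⊆ Finset.range S.card ×ˢ Finset.range Δ := by
  rw [code]
  intro p hp
  rw [Finset.mem_image] at hp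
  obtain ⟨s, hs, rfl⟩ := hp
  rw [Finset.mem_Ico] at hs
  have hps := parent_exists S v hv hconn hs.1 hs.2
  obtain ⟨hs1, hs2⟩ := pIdx_spec S v hps
  rw [Finset.mem_product, Finset.mem_range, Finset.mem_range]
  exact ⟨lt_trans hs1 hs.2, slot_lt hdeg hs2⟩

/-- the candidate set is determined by the code, the partial vertex sequence and
the partial prefix set -/
lemma cand_decode (S : Finset V) (v : V) (hv : v ∈ S)
    (hconn : (SimpleGraph.induce (↑S : Set V) G).Connected) (i : ℕ) :
    cand G S (U G S v i) = Finset.univ.filter (fun x =>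
      x ∉ U G S v i ∧ ∃ j ≤ i, ∃ d, (j, d) ∈ code G S v ∧
        G.Adj (u G S v j) x ∧ slot G (u G S v j) x = d) := by
  ext x
  rw [cand, Finset.mem_filter, Finset.mem_filter, Finset.mem_sdiff]
  constructor
  · rintro ⟨⟨hxS, hxU⟩, y, hy, hadj⟩
    refine ⟨Finset.mem_univ x, hxU, ?_⟩
    -- x = u s for some s
    have hxmem : x ∈ U G S v (S.card - 1) := by rw [U_eq_S S v hv hconn]; exact hxS
    obtain ⟨s, hsle, hsu⟩ := mem_U_exists S v _ hxmem
    have hs1 : 1 ≤ s := by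
      rcases Nat.eq_zero_or_pos s with rfl | h
      · exfalso; apply hxU; rw [← hsu]; exact v_mem_U S v i
      · exact h
    have hscard : s < S.card := by
      have : 1 ≤ S.card := Finset.card_pos.mpr ⟨v, hv⟩
      omega
    obtain ⟨j, hj, hju⟩ := mem_U_exists S v i hy
    -- j < s since u s = x ∉ U i ∋ u s would otherwise
    have hjs : j < s := by
      by_contra hc
      push_neg at hc
      exact hxU (hsu ▸ U_mono S v (hc.trans hj) (u_mem_U S v s))
    have hadj' : G.Adj (u G S v j) (u G S v s) := by rw [hju, hsu]; exact hadj
    have hple : pIdx G S v s ≤ j := pIdx_min S v hjs hadj'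
    have hpex : ∃ j', j' < s ∧ G.Adj (u G S v j') (u G S v s) := ⟨j, hjs, hadj'⟩
    obtain ⟨hp1, hp2⟩ := pIdx_spec S v hpex
    refine ⟨pIdx G S v s, le_trans hple hj,
      slot G (u G S v (pIdx G S v s)) (u G S v s), ?_, ?_, ?_⟩
    · rw [code, Finset.mem_image]
      exact ⟨s, Finset.mem_Ico.mpr ⟨hs1, hscard⟩, rfl⟩
    · rw [hsu] at hp2; exact hp2
    · rw [hsu]
  · rintro ⟨-, hxU, j, hji, d, hcode, hadj, hslot⟩
    -- decode: find s with the pair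
    rw [code, Finset.mem_image] at hcode
    obtain ⟨s, hs, heq⟩ := hcode
    rw [Finset.mem_Ico] at hs
    have h1 : pIdx G S v s = j := congrArg Prod.fst heq
    have h2 : slot G (u G S v (pIdx G S v s)) (u G S v s) = d := congrArg Prod.snd heq
    have hps := parent_exists S v hv hconn hs.1 hs.2
    obtain ⟨hp1, hp2⟩ := pIdx_spec S v hps
    rw [h1] at hp2 h2
    have hxu : x = u G S v s := slot_inj hadj hp2 (by rw [hslot, h2])
    have hxS : x ∈ S := by
      have hm : u G S v s ∈ U G S v (S.card - 1) :=
        U_mono S v (by omega) (u_mem_U S v s)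
      rw [U_eq_S S v hv hconn] at hm
      rw [hxu]
      exact hm
    exact ⟨⟨hxS, hxU⟩, u G S v j, U_mono S v hji (u_mem_U S v j), hadj⟩

/-- prefixes are images of the vertex sequence -/
lemma U_eq_image (S : Finset V) (v : V) (i : ℕ) :
    U G S v i = (Finset.range (i+1)).image (u G S v) := by
  induction i with
  | zero => simp [U_zero, u]
  | succ i ih =>
    rw [U_succ_eq, ih, ← Finset.image_insert, ← Finset.range_add_one]

/-- main injectivity: the pair (card, code) determines the polymer -/
lemma code_inj (S T : Finset V) (v : V) (hvS : v ∈ S) (hvT : v ∈ T)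
    (hcS : (SimpleGraph.induce (↑S : Set V) G).Connected)
    (hcT : (SimpleGraph.induce (↑T : Set V) G).Connected)
    (hcard : S.card = T.card) (hcode : code G S v = code G T v) : S = T := by
  have hu : ∀ i, u G S v i = u G T v i := by
    intro i
    induction i using Nat.strong_induction_on with
    | _ i ih =>
      match i with
      | 0 => rfl
      | (i+1) =>
        have hU : U G S v i = U G T v i := by
          rw [U_eq_image, U_eq_image]
          apply Finset.image_congr
          intro j hj
          rw [Finset.coe_range, Set.mem_Iio] at hj
          exact ih j (by omega)
        have hcand : cand G S (U G S v i) = cand G T (U G T v i) := by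
          rw [cand_decode S v hvS hcS i, cand_decode T v hvT hcT i]
          ext x
          rw [Finset.mem_filter, Finset.mem_filter]
          constructor
          · rintro ⟨hx, h1, j, hj, d, hc, hadj, hslot⟩
            rw [hU] at h1
            rw [ih j (by omega)] at hadj hslot
            exact ⟨hx, h1, j, hj, d, hcode ▸ hc, hadj, hslot⟩
          · rintro ⟨hx, h1, j, hj, d, hc, hadj, hslot⟩
            rw [← hU] at h1
            rw [← ih j (by omega)] at hadj hslot
            exact ⟨hx, h1, j, hj, d, hcode ▸ hc, hadj, hslot⟩
        have key : ∀ (A B : Finset V), A = B →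
            (if h : A.Nonempty then A.min' h else v) = (if h : B.Nonempty then B.min' h else v) := by
          rintro A B rfl; rfl
        show u G S v (i+1) = u G T v (i+1)
        rw [u, u]
        exact key _ _ hcand
  have h1 : S = U G S v (S.card - 1) := (U_eq_S S v hvS hcS).symm
  have h2 : T = U G T v (T.card - 1) := (U_eq_S T v hvT hcT).symm
  rw [h1, h2, U_eq_image, U_eq_image, hcard]
  apply Finset.image_congr
  intro j _
  exact hu j

end KPaux


lemma succ_pow_le (m : ℕ) : ((m:ℝ)+1)^m ≤ Real.exp 1 * (m:ℝ)^m := by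
  rcases Nat.eq_zero_or_pos m with rfl | hm
  · have h := Real.add_one_le_exp (1:ℝ)
    norm_num

  · have hm' : (0:ℝ) < m := by exact_mod_cast hm
    have h1 : (m:ℝ) + 1 ≤ (m:ℝ) * Real.exp (1/m) := by
      have := Real.add_one_le_exp (1/(m:ℝ))
      calc (m:ℝ) + 1 = (m:ℝ) * (1/(m:ℝ) + 1) := by field_simp; ring
        _ ≤ (m:ℝ) * Real.exp (1/m) := by nlinarith [Real.add_one_le_exp (1/(m:ℝ))]
    calc ((m:ℝ)+1)^m ≤ ((m:ℝ) * Real.exp (1/m))^m := by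
          apply pow_le_pow_left₀ (by positivity) h1
      _ = (m:ℝ)^m * Real.exp (1/m)^m := mul_pow _ _ _
      _ = (m:ℝ)^m * Real.exp 1 := by
          rw [← Real.exp_nat_mul]
          congr 1
          field_simp
      _ = Real.exp 1 * (m:ℝ)^m := mul_comm _ _

lemma pow_le_exp_factorial : ∀ m : ℕ, (m:ℝ)^m ≤ Real.exp 1 ^ m * m.factorial
  | 0 => by norm_num
  | (m+1) => by
    have ih := pow_le_exp_factorial m
    have h1 := succ_pow_le m
    have hfac : (0:ℝ) < m.factorial := by exact_mod_cast m.factorial_pos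
    have he : (0:ℝ) < Real.exp 1 := Real.exp_pos 1
    push_cast
    calc ((m:ℝ)+1)^(m+1) = ((m:ℝ)+1)^m * ((m:ℝ)+1) := pow_succ _ _
      _ ≤ (Real.exp 1 * (m:ℝ)^m) * ((m:ℝ)+1) := by
          apply mul_le_mul_of_nonneg_right h1 (by positivity)
      _ ≤ (Real.exp 1 * (Real.exp 1 ^ m * m.factorial)) * ((m:ℝ)+1) := by
          apply mul_le_mul_of_nonneg_right _ (by positivity)
          exact mul_le_mul_of_nonneg_left ih he.le
      _ = Real.exp 1 ^ (m+1) * (m.factorial * (m+1)) := by ring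
      _ = Real.exp 1 ^ (m+1) * ((m+1).factorial) := by
          rw [Nat.factorial_succ]
          push_cast
          ring

lemma choose_bound (Δ k : ℕ) (hk : 1 ≤ k) :
    (((k*Δ).choose (k-1) : ℕ) : ℝ) ≤ Real.exp 1 ^ k * (Δ:ℝ)^(k-1) := by
  obtain ⟨m, rfl⟩ : ∃ m, k = m + 1 := ⟨k - 1, by omega⟩
  have h1 : ((((m+1)*Δ).choose m : ℕ) : ℝ) ≤ (((m+1)*Δ:ℕ):ℝ)^m / m.factorial :=
    Nat.choose_le_pow_div m ((m+1)*Δ)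
  have hfac : (0:ℝ) < m.factorial := by exact_mod_cast m.factorial_pos
  have h2 : (((m+1)*Δ:ℕ):ℝ)^m = ((m:ℝ)+1)^m * (Δ:ℝ)^m := by
    push_cast
    rw [mul_pow]
  have h3 : ((m:ℝ)+1)^m ≤ Real.exp 1 ^ (m+1) * m.factorial := by
    calc ((m:ℝ)+1)^m ≤ Real.exp 1 * (m:ℝ)^m := succ_pow_le m
      _ ≤ Real.exp 1 * (Real.exp 1 ^ m * m.factorial) :=
          mul_le_mul_of_nonneg_left (pow_le_exp_factorial m) (Real.exp_pos 1).le
      _ = Real.exp 1 ^ (m+1) * m.factorial := by ring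
  have hΔp : (0:ℝ) ≤ (Δ:ℝ)^m := by positivity
  calc ((((m+1)*Δ).choose m : ℕ) : ℝ) ≤ (((m+1)*Δ:ℕ):ℝ)^m / m.factorial := h1
    _ = ((m:ℝ)+1)^m * (Δ:ℝ)^m / m.factorial := by rw [h2]
    _ ≤ (Real.exp 1 ^ (m+1) * m.factorial) * (Δ:ℝ)^m / m.factorial := by
        gcongr
    _ = Real.exp 1 ^ (m+1) * (Δ:ℝ)^m := by field_simp
    _ = Real.exp 1 ^ (m+1) * (Δ:ℝ)^(m+1-1) := by norm_num


attribute [local instance] Classical.propDecidable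

set_option maxHeartbeats 1000000 in
theorem kotecky_preiss_single_vertex_sum {V : Type*} [Fintype V] [DecidableEq V]
    (G : SimpleGraph V) [DecidableRel G.Adj] (Δ : ℕ) (hΔ : 2 ≤ Δ)
    (hdeg : ∀ v, G.degree v ≤ Δ) (b : ℝ) (hb : 0 < b)
    (size : {s : Finset V // s.Nonempty ∧ (SimpleGraph.induce (↑↑s : Set V) G).Connected} → ℝ)
    (w : {s : Finset V // s.Nonempty ∧ (SimpleGraph.induce (↑↑s : Set V) G).Connected} → ℂ)
    (hsz : ∀ γ, b * γ.val.card ≤ size γ)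
    (hw : ∀ γ, ‖w γ‖ ≤ Real.exp (-(((3 + Real.log Δ) / b) + 3) * size γ))
    (v : V) :
    ∑ γ ∈ Finset.univ.filter (fun γ :
        {s : Finset V // s.Nonempty ∧ (SimpleGraph.induce (↑↑s : Set V) G).Connected} =>
        v ∈ γ.val),
      ‖w γ‖ * Real.exp (γ.val.card + 3 * size γ) < 1 := by
  letI : LinearOrder V := LinearOrder.lift' (Fintype.equivFin V) (Fintype.equivFin V).injective
  have hdeg0 := hdeg
  set F := Finset.univ.filter (fun γ :
      {s : Finset V // s.Nonempty ∧ (SimpleGraph.induce (↑↑s : Set V) G).Connected} =>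
      v ∈ γ.val) with hFdef
  set r : ℝ := Real.exp (-(2 + Real.log Δ)) with hr
  have hdeg' : ∀ w : V, G.degree w ≤ Δ := fun x => by
    convert hdeg x using 2
  have hΔ1 : (1:ℝ) ≤ (Δ:ℝ) := by exact_mod_cast le_trans one_le_two hΔ
  have hΔ2 : (2:ℝ) ≤ (Δ:ℝ) := by exact_mod_cast hΔ
  have hΔ0 : (0:ℝ) < (Δ:ℝ) := by linarith
  have hlog : 0 ≤ Real.log Δ := Real.log_nonneg hΔ1
  -- step 1 : pointwise bound
  have step1 : ∀ γ ∈ F, ‖w γ‖ * Real.exp (γ.val.card + 3 * size γ)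
      ≤ r ^ (γ.val.card) := by
    intro γ _
    have h1 := hw γ
    have h2 := hsz γ
    have hcoef : 0 ≤ (3 + Real.log Δ) / b := by positivity
    have key : (-(((3 + Real.log Δ) / b) + 3)) * size γ + (γ.val.card + 3 * size γ)
        ≤ (-(2 + Real.log Δ)) * γ.val.card := by
      have h3 : (3 + Real.log Δ) * γ.val.card ≤ ((3 + Real.log Δ)/b) * size γ := by
        calc (3 + Real.log Δ) * (γ.val.card : ℝ)
            = ((3 + Real.log Δ)/b) * (b * γ.val.card) := by field_simp
          _ ≤ ((3 + Real.log Δ)/b) * size γ := mul_le_mul_of_nonneg_left h2 hcoef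
      nlinarith [h3]
    calc ‖w γ‖ * Real.exp (γ.val.card + 3 * size γ)
        ≤ Real.exp (-(((3 + Real.log Δ) / b) + 3) * size γ)
            * Real.exp (γ.val.card + 3 * size γ) :=
          mul_le_mul_of_nonneg_right h1 (Real.exp_pos _).le
      _ = Real.exp ((-(((3 + Real.log Δ) / b) + 3)) * size γ + (γ.val.card + 3 * size γ)) :=
          (Real.exp_add _ _).symm
      _ ≤ Real.exp ((-(2 + Real.log Δ)) * γ.val.card) := Real.exp_le_exp.mpr key
      _ = r ^ (γ.val.card) := by rw [hr, ← Real.exp_nat_mul, mul_comm]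
  -- step 3 : fiberwise bound
  have fiber : ∀ k ∈ F.image (fun γ => γ.val.card),
      ((F.filter (fun γ => γ.val.card = k)).card : ℝ) * r ^ k ≤ (1/2:ℝ)^(k+1) := by
    intro k hk
    obtain ⟨γ0, hγ0, hk0⟩ := Finset.mem_image.mp hk
    have hk1 : 1 ≤ k := by
      rw [← hk0]
      exact Finset.card_pos.mpr ⟨v, (Finset.mem_filter.mp hγ0).2⟩
    have hinj : (F.filter (fun γ => γ.val.card = k)).card ≤ (k*Δ).choose (k-1) := by
      have hcc := Finset.card_le_card_of_injOn
        (s := F.filter (fun γ => γ.val.card = k))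
        (t := (Finset.range k ×ˢ Finset.range Δ).powersetCard (k-1))
        (fun γ => KPaux.code G γ.val v) ?_ ?_
      · rwa [Finset.card_powersetCard, Finset.card_product, Finset.card_range,
          Finset.card_range] at hcc
      · intro γ hγ
        rw [Finset.mem_coe, Finset.mem_filter] at hγ
        obtain ⟨hγF, hγk⟩ := hγ
        have hvγ : v ∈ γ.val := (Finset.mem_filter.mp hγF).2
        rw [Finset.mem_coe, Finset.mem_powersetCard]
        constructor
        · have hsub := KPaux.code_subset hdeg' γ.val v hvγ γ.prop.2
          rwa [hγk] at hsub
        · rw [KPaux.code_card γ.val v hvγ γ.prop.2, hγk]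
      · intro γ1 h1 γ2 h2 he
        simp only [Finset.coe_filter, Set.mem_setOf_eq, Finset.mem_filter] at h1 h2
        have hv1 : v ∈ γ1.val := (Finset.mem_filter.mp h1.1).2
        have hv2 : v ∈ γ2.val := (Finset.mem_filter.mp h2.1).2
        exact Subtype.ext (KPaux.code_inj γ1.val γ2.val v hv1 hv2 γ1.prop.2 γ2.prop.2
          (h1.2.trans h2.2.symm) he)
    obtain ⟨m, rfl⟩ : ∃ m, k = m+1 := ⟨k-1, by omega⟩
    have hC := choose_bound Δ (m+1) hk1
    simp only [Nat.add_sub_cancel] at hC hinj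
    have hNle : ((F.filter (fun γ => γ.val.card = m+1)).card : ℝ)
        ≤ Real.exp 1 ^ (m+1) * (Δ:ℝ)^m := le_trans (by exact_mod_cast hinj) hC
    have e1 : Real.exp 1 * Real.exp (-2) = Real.exp (-1) := by
      rw [← Real.exp_add]; norm_num
    have hrk : r ^ (m+1) = Real.exp (-2)^(m+1) * ((Δ:ℝ)^(m+1))⁻¹ := by
      rw [hr, show -(2 + Real.log (Δ:ℝ)) = -2 + -Real.log (Δ:ℝ) by ring, Real.exp_add, mul_pow,
        Real.exp_neg (Real.log (Δ:ℝ)), Real.exp_log hΔ0, ← inv_pow]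
    have hexp1 : Real.exp (-1) ≤ 1/2 := by
      have h2 : (2:ℝ) ≤ Real.exp 1 := by nlinarith [Real.add_one_le_exp (1:ℝ)]
      have h3 : Real.exp (-1) * 2 ≤ Real.exp (-1) * Real.exp 1 :=
        mul_le_mul_of_nonneg_left h2 (Real.exp_pos _).le
      rw [← Real.exp_add] at h3
      norm_num at h3
      linarith
    have hrpos : (0:ℝ) ≤ r ^ (m+1) := by positivity
    calc ((F.filter (fun γ => γ.val.card = m+1)).card : ℝ) * r ^ (m+1)
        ≤ (Real.exp 1 ^ (m+1) * (Δ:ℝ)^m) * r ^ (m+1) :=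
          mul_le_mul_of_nonneg_right hNle hrpos
      _ = (Real.exp 1 * Real.exp (-2))^(m+1) * ((Δ:ℝ)^m * ((Δ:ℝ)^(m+1))⁻¹) := by
          rw [hrk, mul_pow]; ring
      _ = Real.exp (-1)^(m+1) * ((Δ:ℝ))⁻¹ := by
          rw [e1]
          congr 1
          rw [pow_succ]
          field_simp
      _ ≤ (1/2:ℝ)^(m+1) * (1/2) := by
          apply mul_le_mul (pow_le_pow_left₀ (Real.exp_pos _).le hexp1 _) ?_
            (by positivity) (by positivity)
          calc ((Δ:ℝ))⁻¹ ≤ (2:ℝ)⁻¹ := by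
                apply inv_anti₀ (by norm_num) hΔ2
            _ = 1/2 := by norm_num
      _ = (1/2:ℝ)^(m+1+1) := by ring
  -- assemble
  have himg : F.image (fun γ => γ.val.card) ⊆ Finset.range (Fintype.card V + 1) := by
    intro k hk
    obtain ⟨γ0, _, rfl⟩ := Finset.mem_image.mp hk
    rw [Finset.mem_range]
    exact Nat.lt_succ_of_le (Finset.card_le_univ _)
  calc ∑ γ ∈ F, ‖w γ‖ * Real.exp (γ.val.card + 3 * size γ)
      ≤ ∑ γ ∈ F, r ^ (γ.val.card) := Finset.sum_le_sum step1
    _ = ∑ k ∈ F.image (fun γ => γ.val.card),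
          (F.filter (fun γ => γ.val.card = k)).card • r^k :=
        Finset.sum_comp (fun k => r^k)
          (fun γ : {s : Finset V // s.Nonempty ∧ (SimpleGraph.induce (↑↑s : Set V) G).Connected} =>
            γ.val.card)
    _ ≤ ∑ k ∈ F.image (fun γ => γ.val.card), (1/2:ℝ)^(k+1) := by
        apply Finset.sum_le_sum
        intro k hk
        rw [nsmul_eq_mul]
        exact fiber k hk
    _ ≤ ∑ k ∈ Finset.range (Fintype.card V + 1), (1/2:ℝ)^(k+1) :=
        Finset.sum_le_sum_of_subset_of_nonneg himg (by intros; positivity)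
    _ < 1 := by
        have hsplit : ∑ k ∈ Finset.range (Fintype.card V + 1), (1/2:ℝ)^(k+1)
            = (1/2) * ∑ k ∈ Finset.range (Fintype.card V + 1), (1/2:ℝ)^k := by
          rw [Finset.mul_sum]
          apply Finset.sum_congr rfl
          intros
          rw [pow_succ]
          ring
        rw [hsplit, geom_sum_eq (by norm_num : (1/2:ℝ) ≠ 1)]
        have hp : (0:ℝ) < (1/2:ℝ)^(Fintype.card V + 1) := by positivity
        have hq : ((1/2:ℝ)^(Fintype.card V + 1) - 1)/((1/2:ℝ)-1)
            = 2*(1 - (1/2:ℝ)^(Fintype.card V + 1)) := by ring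
        rw [hq]
        linarith
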